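/- Let T and T' be reduction operators relative to (X*, <) with ker(T) ⊆ ker(T'), let w be a monomial, and let f ∈ K⟨X*⟩ admit a (T, w)-type decomposition. Then f admits a (T', w)-type decomposition. -/

import Mathlib

/-- A reduction operator relative to `(X*, <)`: an idempotent `K`-linear endomorphism `T`
of the free algebra `K⟨X*⟩ = MonoidAlgebra K (FreeMonoid X)` such that `T w ≤ w` for every
monomial `w`, i.e. `T` fixes the basis vector of `w`, or every monomial in the support of
its image is strictly smaller than `w`. -/
def IsReductionOperator {K M : Type*} [Field K] [Monoid M] [LinearOrder M]
    (T : MonoidAlgebra K M →ₗ[K] MonoidAlgebra K M) : Prop :=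
  T ∘ₗ T = T ∧ ∀ w : M,
    T (MonoidAlgebra.single w 1) = MonoidAlgebra.single w 1 ∨
      ∀ u ∈ (T (MonoidAlgebra.single w 1)).coeff.support, u < w

/-- The operator `S_{n,m}` : it fixes monomials of length `< n + m`, and sends
`w = w₁w₂w₃` with `|w₁| = n`, `|w₃| = m` to `w₁ ⬝ S(w₂) ⬝ w₃`. -/
noncomputable def extOp {K X : Type*} [Field K]
    (S : MonoidAlgebra K (FreeMonoid X) →ₗ[K] MonoidAlgebra K (FreeMonoid X)) (n m : ℕ) :
    MonoidAlgebra K (FreeMonoid X) →ₗ[K] MonoidAlgebra K (FreeMonoid X) :=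
  (Finsupp.lift (MonoidAlgebra K (FreeMonoid X)) K (FreeMonoid X) fun w =>
    if w.length < n + m then MonoidAlgebra.single w 1
    else
      MonoidAlgebra.single (FreeMonoid.ofList (w.toList.take n)) (1 : K) *
        S (MonoidAlgebra.single
            (FreeMonoid.ofList ((w.toList.drop n).take (w.toList.length - n - m))) 1) *
        MonoidAlgebra.single (FreeMonoid.ofList (w.toList.drop (w.toList.length - m))) (1 : K))
    ∘ₗ (MonoidAlgebra.coeffLinearEquiv K).toLinearMap

/-- `f` admits a `(T, w)`-type decomposition:
`f = ∑ᵢ λᵢ w¹ᵢ (wᵢ − T(wᵢ)) w²ᵢ` with each `λᵢ ≠ 0`, each `wᵢ` `T`-reducible, and each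
monomial `w¹ᵢ wᵢ w²ᵢ` strictly smaller than `w`. -/
def HasTypeDecomp {K X : Type*} [Field K] [LinearOrder (FreeMonoid X)]
    (T : MonoidAlgebra K (FreeMonoid X) →ₗ[K] MonoidAlgebra K (FreeMonoid X))
    (w : FreeMonoid X) (f : MonoidAlgebra K (FreeMonoid X)) : Prop :=
  ∃ (k : ℕ) (c : Fin k → K) (a b wm : Fin k → FreeMonoid X),
    (∀ i, c i ≠ 0) ∧
    (∀ i, T (MonoidAlgebra.single (wm i) 1) ≠ MonoidAlgebra.single (wm i) 1) ∧
    (∀ i, a i * wm i * b i < w) ∧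
    f = ∑ i, c i • (MonoidAlgebra.single (a i) 1 *
      (MonoidAlgebra.single (wm i) 1 - T (MonoidAlgebra.single (wm i) 1)) *
      MonoidAlgebra.single (b i) 1)

section Aux
open MonoidAlgebra

variable {K M : Type*} [Field K] [Monoid M] [LinearOrder M]
variable {T : MonoidAlgebra K M →ₗ[K] MonoidAlgebra K M}

private theorem supp_le (hT : IsReductionOperator T) (v : M) :
    ∀ x ∈ (T (single v 1)).coeff.support, x ≤ v := by
  intro x hx
  rcases hT.2 v with h | h
  · rw [h] at hx
    have := Finsupp.support_single_subset hx
    simp at this; exact this.le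
  · exact (h x hx).le

private theorem apply_eq_zero (hT : IsReductionOperator T) (u : M) (h : MonoidAlgebra K M)
    (hh : ∀ v ∈ h.coeff.support, v < u) : (T h).coeff u = 0 := by
  have hrep : h = ∑ v ∈ h.coeff.support, single v (h.coeff v) := by
    exact (sum_coeff_single h).symm
  rw [hrep, map_sum]
  rw [coeff_sum, Finsupp.finset_sum_apply]
  apply Finset.sum_eq_zero
  intro v hv
  have h1 : single v (h.coeff v) = (h.coeff v) • (single v 1 : MonoidAlgebra K M) := by
    rw [MonoidAlgebra.smul_single', mul_one]
  rw [h1, map_smul, coeff_smul, Finsupp.smul_apply]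
  have : u ∉ (T (single v 1)).coeff.support := by
    intro hu
    exact absurd (supp_le hT v u hu) (not_le.mpr (hh v hv))
  rw [Finsupp.notMem_support_iff.mp this, smul_zero]

private theorem TT_apply (hT : IsReductionOperator T) (x : MonoidAlgebra K M) : T (T x) = T x := by
  have := LinearMap.congr_fun hT.1 x
  simpa using this

private theorem ker_decomp [WellFoundedLT M] (hT : IsReductionOperator T) (B : M) :
    ∀ g : MonoidAlgebra K M, T g = 0 → (∀ u ∈ g.coeff.support, u ≤ B) →
    ∃ (k : ℕ) (d : Fin k → K) (u : Fin k → M),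
      (∀ j, d j ≠ 0) ∧ (∀ j, T (single (u j) 1) ≠ single (u j) 1) ∧ (∀ j, u j ≤ B) ∧
      g = ∑ j, d j • (single (u j) 1 - T (single (u j) 1)) := by
  induction B using WellFoundedLT.induction with
  | ind B IH =>
  intro g hg hbound
  by_cases hg0 : g = 0
  · exact ⟨0, Fin.elim0, Fin.elim0, fun i => i.elim0, fun i => i.elim0, fun i => i.elim0,
      by simp [hg0]⟩
  have hne : g.coeff.support.Nonempty := Finsupp.support_nonempty_iff.mpr (by simpa using hg0)
  set u0 := g.coeff.support.max' hne with hu0def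
  have hu0mem : u0 ∈ g.coeff.support := g.coeff.support.max'_mem hne
  have hlam : g.coeff u0 ≠ 0 := Finsupp.mem_support_iff.mp hu0mem
  have hu0B : u0 ≤ B := hbound u0 hu0mem
  -- u0 is T-reducible
  have hred : T (single u0 1) ≠ single u0 1 := by
    intro heq
    set r : MonoidAlgebra K M := g - single u0 (g.coeff u0) with hrdef
    have hsplit : g = single u0 (g.coeff u0) + r := by rw [hrdef]; abel
    have h1 : (T (single u0 (g.coeff u0) : MonoidAlgebra K M)).coeff u0 = g.coeff u0 := by
      have : (single u0 (g.coeff u0) : MonoidAlgebra K M) = g.coeff u0 • single u0 1 := by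
        rw [MonoidAlgebra.smul_single', mul_one]
      rw [this, map_smul, heq, coeff_smul, Finsupp.smul_apply, coeff_single, Finsupp.single_eq_same, smul_eq_mul, mul_one]
    have h2 : (T r).coeff u0 = 0 := by
      apply apply_eq_zero hT
      intro v hv
      have hvne : v ≠ u0 := by
        intro hveq
        apply Finsupp.mem_support_iff.mp hv
        rw [hrdef, hveq, coeff_sub, Finsupp.sub_apply, coeff_single, Finsupp.single_eq_same, sub_self]
      have hvg : r.coeff v = g.coeff v := by
        rw [hrdef, coeff_sub, Finsupp.sub_apply, coeff_single, Finsupp.single_eq_of_ne' (Ne.symm hvne), sub_zero]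
      have : v ∈ g.coeff.support := by
        rw [Finsupp.mem_support_iff, ← hvg]; exact Finsupp.mem_support_iff.mp hv
      exact lt_of_le_of_ne (g.coeff.support.le_max' v this) hvne
    have : (T g).coeff u0 = g.coeff u0 := by
      conv_lhs => rw [hsplit]
      rw [map_add, coeff_add, Finsupp.add_apply, h1, h2, add_zero]
    rw [hg] at this
    exact hlam (by simpa using this.symm)
  have hTu0 : ∀ x ∈ (T (single u0 1 : MonoidAlgebra K M)).coeff.support, x < u0 := by
    rcases hT.2 u0 with h | h
    · exact absurd h hred
    · exact h
  set p : MonoidAlgebra K M := single u0 1 - T (single u0 1) with hpdef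
  set g' : MonoidAlgebra K M := g - g.coeff u0 • p with hg'def
  have hTg' : T g' = 0 := by
    rw [hg'def, map_sub, map_smul, hpdef, map_sub, TT_apply hT, sub_self, smul_zero, sub_zero, hg]
  have hg'supp : ∀ v ∈ g'.coeff.support, v < u0 := by
    intro v hv
    by_contra hge
    push_neg at hge
    have hTv : (T (single u0 1 : MonoidAlgebra K M)).coeff v = 0 := by
      by_contra h0
      exact absurd (hTu0 v (Finsupp.mem_support_iff.mpr h0)) (not_lt.mpr hge)
    have hval : g'.coeff v = 0 := by
      rcases eq_or_lt_of_le hge with heq | hlt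
      · rw [← heq] at hTv ⊢
        rw [hg'def, coeff_sub, Finsupp.sub_apply, coeff_smul, Finsupp.smul_apply, hpdef, coeff_sub, Finsupp.sub_apply,
          coeff_single, Finsupp.single_eq_same, hTv]
        simp
      · have hgv : g.coeff v = 0 := by
          by_contra h0
          exact absurd (g.coeff.support.le_max' v (Finsupp.mem_support_iff.mpr h0)) (not_le.mpr hlt)
        rw [hg'def, coeff_sub, Finsupp.sub_apply, coeff_smul, Finsupp.smul_apply, hpdef, coeff_sub, Finsupp.sub_apply,
          coeff_single, Finsupp.single_eq_of_ne' (ne_of_lt hlt), hTv, hgv]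
        simp
    exact Finsupp.mem_support_iff.mp hv hval
  have hgeq : g = g.coeff u0 • p + g' := by rw [hg'def]; abel
  by_cases hg'0 : g' = 0
  · have hgp : g = g.coeff u0 • p := by
      have h0 : g - g.coeff u0 • p = 0 := hg'def ▸ hg'0
      exact sub_eq_zero.mp h0
    refine ⟨1, fun _ => g.coeff u0, fun _ => u0, fun _ => hlam, fun _ => hred, fun _ => hu0B, ?_⟩
    rw [Fin.sum_univ_one]
    exact hgp
  · have hne' : g'.coeff.support.Nonempty := Finsupp.support_nonempty_iff.mpr (by simpa using hg'0)
    set B' := g'.coeff.support.max' hne' with hB'def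
    have hB'lt : B' < B := lt_of_lt_of_le (hg'supp B' (g'.coeff.support.max'_mem hne')) hu0B
    obtain ⟨k, d, u, hd, hu, hub, hsum⟩ := IH B' hB'lt g' hTg'
      (fun v hv => g'.coeff.support.le_max' v hv)
    refine ⟨k + 1, Fin.cons (g.coeff u0) d, Fin.cons u0 u, ?_, ?_, ?_, ?_⟩
    · intro j; refine Fin.cases ?_ ?_ j <;> simp [hlam, hd]
    · intro j; refine Fin.cases ?_ ?_ j <;> simp [hred, hu]
    · intro j
      refine Fin.cases ?_ ?_ j
      · simpa using hu0B
      · intro i; simpa using le_trans (hub i) hB'lt.le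
    · rw [Fin.sum_univ_succ]
      simp only [Fin.cons_zero, Fin.cons_succ]
      rw [← hsum]
      exact hgeq

end Aux

theorem stmt_14 {K X : Type*} [Field K]
    [LinearOrder (FreeMonoid X)] [WellFoundedLT (FreeMonoid X)]
    (hone : ∀ w : FreeMonoid X, w ≠ 1 → 1 < w)
    (hmul : ∀ w w' a b : FreeMonoid X, w < w' → a * w * b < a * w' * b)
    (T T' : MonoidAlgebra K (FreeMonoid X) →ₗ[K] MonoidAlgebra K (FreeMonoid X))
    (hT : IsReductionOperator T) (hT' : IsReductionOperator T')
    (hker : LinearMap.ker T ≤ LinearMap.ker T')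
    (w : FreeMonoid X) (f : MonoidAlgebra K (FreeMonoid X))
    (hf : HasTypeDecomp T w f) :
    HasTypeDecomp T' w f := by
  classical
  obtain ⟨k, c, a, b, wm, hc, hredT, hlt, heq⟩ := hf
  -- each wᵢ - T(wᵢ) is in ker T, hence in ker T'
  set g : Fin k → MonoidAlgebra K (FreeMonoid X) := fun i =>
    MonoidAlgebra.single (wm i) 1 - T (MonoidAlgebra.single (wm i) 1) with hgdef
  have hTg : ∀ i, T (g i) = 0 := by
    intro i
    rw [hgdef]
    simp only [map_sub, TT_apply hT, sub_self]
  have hT'g : ∀ i, T' (g i) = 0 := fun i => hker (LinearMap.mem_ker.mpr (hTg i))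
  have hgsupp : ∀ i, ∀ v ∈ (g i).coeff.support, v ≤ wm i := by
    intro i v hv
    have := Finsupp.support_sub (f := (MonoidAlgebra.single (wm i) (1:K)).coeff)
      (g := (T (MonoidAlgebra.single (wm i) 1)).coeff) hv
    rcases Finset.mem_union.mp this with h | h
    · exact (Finset.mem_singleton.mp (Finsupp.support_single_subset h)).le
    · rcases hT.2 (wm i) with hfix | hlt'
      · exact absurd hfix (hredT i)
      · exact (hlt' v h).le
  choose kk d u hd hu hub hsum using fun i =>
    ker_decomp hT' (wm i) (g i) (hT'g i) (hgsupp i)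
  -- flatten the double index
  set σ := (i : Fin k) × Fin (kk i)
  set e : Fin (Fintype.card σ) ≃ σ := (Fintype.equivFin σ).symm with hedef
  refine ⟨Fintype.card σ, fun p => c (e p).1 * d (e p).1 (e p).2,
    fun p => a (e p).1, fun p => b (e p).1, fun p => u (e p).1 (e p).2, ?_, ?_, ?_, ?_⟩
  · intro p; exact mul_ne_zero (hc _) (hd _ _)
  · intro p; exact hu _ _
  · intro p
    dsimp only
    rcases eq_or_lt_of_le (hub (e p).1 (e p).2) with heq' | hlt'
    · rw [heq']; exact hlt (e p).1
    · exact lt_trans (hmul _ _ _ _ hlt') (hlt (e p).1)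
  · rw [heq]
    have hterm : ∀ i, c i • (MonoidAlgebra.single (a i) 1 *
        (MonoidAlgebra.single (wm i) 1 - T (MonoidAlgebra.single (wm i) 1)) *
        MonoidAlgebra.single (b i) 1) =
        ∑ j : Fin (kk i), (c i * d i j) •
          (MonoidAlgebra.single (a i) 1 *
            (MonoidAlgebra.single (u i j) 1 - T' (MonoidAlgebra.single (u i j) 1)) *
            MonoidAlgebra.single (b i) 1) := by
      intro i
      have : MonoidAlgebra.single (wm i) 1 - T (MonoidAlgebra.single (wm i) 1) = g i := rfl
      rw [this, hsum i]
      rw [Finset.mul_sum, Finset.sum_mul, Finset.smul_sum]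
      apply Finset.sum_congr rfl
      intro j _
      rw [mul_smul_comm, smul_mul_assoc, smul_smul]
    simp only [hterm]
    rw [Finset.sum_sigma', Finset.univ_sigma_univ]
    exact (Equiv.sum_comp e fun q => (c q.1 * d q.1 q.2) •
      (MonoidAlgebra.single (a q.1) 1 *
        (MonoidAlgebra.single (u q.1 q.2) 1 - T' (MonoidAlgebra.single (u q.1 q.2) 1)) *
        MonoidAlgebra.single (b q.1) 1)).symm
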